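/- Let Γ be a connected graph and ℋ(Γ) the combinatorial horoball on Γ. For vertices (v,k) and (w,k) at the same depth k with d_Γ(v,w) = d, the distance in ℋ(Γ) between (v,k) and (w,k) is at most 2⌈log₂(max(d,1))⌉ + 3 (independently of k, and up to an additive constant equal to 2 log₂ d). -/

import Mathlib

/-- The combinatorial horoball on a graph `Γ`: vertices are `V × ℕ` (`(v, k)`
is `v` at depth `k`); vertical edges join `(v, k)` and `(v, k+1)`; horizontal
edges at depth `0` are the edges of `Γ`, and at depth `k > 0` join `(v, k)` and
`(w, k)` whenever `0 < d_Γ(v, w) ≤ 2 ^ k`. -/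
def horoball {V : Type*} (Γ : SimpleGraph V) : SimpleGraph (V × ℕ) where
  Adj p q :=
    (p.2 = q.2 ∧ ((p.2 = 0 ∧ Γ.Adj p.1 q.1) ∨
      (0 < p.2 ∧ p.1 ≠ q.1 ∧ Γ.dist p.1 q.1 ≤ 2 ^ p.2))) ∨
    (p.1 = q.1 ∧ (p.2 = q.2 + 1 ∨ q.2 = p.2 + 1))
  symm := by
    constructor
    rintro ⟨v, k⟩ ⟨w, l⟩ (⟨h, ⟨h0, ha⟩ | ⟨hk, hne, hd⟩⟩ | ⟨h, hl⟩)
    · subst h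
      exact Or.inl ⟨rfl, Or.inl ⟨h0, ha.symm⟩⟩
    · subst h
      exact Or.inl ⟨rfl, Or.inr ⟨hk, hne.symm, by rwa [SimpleGraph.dist_comm]⟩⟩
    · exact Or.inr ⟨h.symm, hl.symm⟩
  loopless := by
    constructor
    rintro ⟨v, k⟩ (⟨-, ⟨-, ha⟩ | ⟨-, hne, -⟩⟩ | ⟨-, hl | hl⟩)
    · exact Γ.loopless.irrefl v ha
    · exact hne rfl
    · omega
    · omega

lemma horoball_exists_walk_down {V : Type*} (Γ : SimpleGraph V) (v : V) (k : ℕ) :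
    ∀ t : ℕ, ∃ p : (horoball Γ).Walk (v, k + t) (v, k), p.length = t := by
  intro t
  induction t with
  | zero => exact ⟨SimpleGraph.Walk.nil, rfl⟩
  | succ t ih =>
    obtain ⟨p, hp⟩ := ih
    have hadj : (horoball Γ).Adj (v, k + (t + 1)) (v, k + t) :=
      Or.inr ⟨rfl, Or.inl rfl⟩
    exact ⟨SimpleGraph.Walk.cons hadj p, by simp [hp]⟩

/-- In a combinatorial horoball, two vertices at the same depth `k` whose
`Γ`-distance is `d` are at distance at most `2⌈log₂ (max d 1)⌉ + 3`,
independently of `k`. -/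
theorem horoball_dist_same_depth_le {V : Type*} (Γ : SimpleGraph V)
    (hconn : Γ.Connected) (v w : V) (k : ℕ) :
    (horoball Γ).dist (v, k) (w, k) ≤
      2 * Nat.clog 2 (max (Γ.dist v w) 1) + 3 := by
  rcases eq_or_ne v w with rfl | hne
  · simp [SimpleGraph.dist_self]
  · set d := Γ.dist v w with hd
    have hd1 : 1 ≤ d := Nat.one_le_iff_ne_zero.mpr (by
      intro h
      exact hne ((hconn.dist_eq_zero_iff).mp h))
    set m := Nat.clog 2 d with hm
    have hdm : d ≤ 2 ^ m := Nat.le_pow_clog one_lt_two d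
    have hmax : max d 1 = d := Nat.max_eq_left hd1
    rw [hmax]
    set L := max m 1 with hL
    rcases le_or_gt L k with hk | hk
    · -- direct horizontal edge at depth k
      have hadj : (horoball Γ).Adj (v, k) (w, k) := by
        refine Or.inl ⟨rfl, Or.inr ⟨by omega, hne, ?_⟩⟩
        exact hdm.trans (Nat.pow_le_pow_right (by norm_num) (by omega))
      have := SimpleGraph.dist_le (SimpleGraph.Walk.cons hadj SimpleGraph.Walk.nil)
      simp at this
      omega
    · -- go up to depth L, cross, come back down
      set t := L - k with ht
      have hkt : k + t = L := by omega
      obtain ⟨p, hp⟩ := horoball_exists_walk_down Γ v k t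
      obtain ⟨q, hq⟩ := horoball_exists_walk_down Γ w k t
      have hadj : (horoball Γ).Adj (v, k + t) (w, k + t) := by
        refine Or.inl ⟨rfl, Or.inr ⟨by omega, hne, ?_⟩⟩
        exact hdm.trans (Nat.pow_le_pow_right (by norm_num) (by omega))
      have hwalk := SimpleGraph.dist_le (p.reverse.append (SimpleGraph.Walk.cons hadj q))
      simp [hp, hq] at hwalk
      have : t ≤ m + 1 := by omega
      omega
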